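/- Let p∈U_δ(p₀) and 0<μ≤μ(p). Then the operator H_μ(p) has no eigenvalue in the semi-infinite interval (M(p),∞): for every z>M(p), the only f∈L²(T³) with H_μ(p)f=zf is f=0. -/

import Mathlib

open MeasureTheory Real Filter Topology

noncomputable section

/-- The 3-torus `T³ = (ℝ/2πℤ)³` is modeled as `ℝ³ = Fin 3 → ℝ`; all functions involved
are required to be `2π`-periodic in each variable. -/
abbrev 𝕋 : Type := Fin 3 → ℝ

/-- The shift by `2π` times an integer vector (a period of the torus). -/
def shift (v : Fin 3 → ℤ) : 𝕋 := fun i => 2 * Real.pi * (v i)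

/-- A fundamental domain `(-π, π]³` of the torus, used as the integration domain. -/
def box : Set 𝕋 := Set.univ.pi fun _ => Set.Ioc (-Real.pi) Real.pi

lemma box_measurable : MeasurableSet box :=
  MeasurableSet.univ_pi fun _ => measurableSet_Ioc

lemma box_subset_Icc : box ⊆ Set.Icc (fun _ => -Real.pi) (fun _ => Real.pi) := by
  intro s hs
  constructor <;> intro i
  · exact (hs i trivial).1.le
  · exact (hs i trivial).2

set_option maxHeartbeats 1000000 in
/-- Let `p ∈ U_δ(p₀)` and `0 < μ ≤ μ(p)`.  Then `H_μ(p)` has no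
eigenvalue in `(M(p), ∞)`: for every `z > M(p)`, the only `f ∈ L²(T³)` with
`H_μ(p) f = z f` is `f = 0`. -/
theorem statement16
    (φ : 𝕋 → ℝ)
    (hφa : AnalyticOnNhd ℝ φ Set.univ)
    (hφper : ∀ (x : 𝕋) (v : Fin 3 → ℤ), φ (x + shift v) = φ x)
    (hφnt : φ ≠ 0)
    (w : 𝕋 → 𝕋 → ℝ)
    (hwa : AnalyticOnNhd ℝ (fun x : 𝕋 × 𝕋 => w x.1 x.2) Set.univ)
    (hwper : ∀ (p q : 𝕋) (v u : Fin 3 → ℤ), w (p + shift v) (q + shift u) = w p q)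
    (p₀ q₀ : 𝕋)
    (hmax : ∀ p q : 𝕋, w p q ≤ w p₀ q₀)
    (huniq : ∀ p q : 𝕋, w p q = w p₀ q₀ →
      ∃ v u : Fin 3 → ℤ, p = p₀ + shift v ∧ q = q₀ + shift u)
    (hgrad : fderiv ℝ (fun x : 𝕋 × 𝕋 => w x.1 x.2) (p₀, q₀) = 0)
    (hhess : ∀ v : 𝕋 × 𝕋, v ≠ 0 →
      iteratedFDeriv ℝ 2 (fun x : 𝕋 × 𝕋 => w x.1 x.2) (p₀, q₀) ![v, v] < 0)
    (δ : ℝ) (hδ : 0 < δ) (q0 : 𝕋 → 𝕋)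
    (hq0a : AnalyticOnNhd ℝ q0 (Metric.ball p₀ δ))
    (hq0max : ∀ p ∈ Metric.ball p₀ δ, ∀ q : 𝕋, w p q ≤ w p (q0 p))
    (hq0uniq : ∀ p ∈ Metric.ball p₀ δ, ∀ q : 𝕋, w p q = w p (q0 p) →
      ∃ v : Fin 3 → ℤ, q = q0 p + shift v)
    (hq0grad : ∀ p ∈ Metric.ball p₀ δ, fderiv ℝ (w p) (q0 p) = 0)
    (hq0hess : ∀ p ∈ Metric.ball p₀ δ, ∀ v : 𝕋, v ≠ 0 →
      iteratedFDeriv ℝ 2 (w p) (q0 p) ![v, v] < 0)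
    (p : 𝕋) (hp : p ∈ Metric.ball p₀ δ) (μ : ℝ) (hμ : 0 < μ)
    (hΩ : 0 < (∫ s in box, φ s ^ 2 / (w p (q0 p) - w p s)))
    (hμle : μ ≤ (∫ s in box, φ s ^ 2 / (w p (q0 p) - w p s))⁻¹) :
    ∀ z : ℝ, w p (q0 p) < z →
      ∀ f : 𝕋 → ℝ, MemLp f 2 (volume.restrict box) →
        (∀ᵐ q ∂(volume.restrict box),
          w p q * f q + μ * φ q * ∫ t in box, φ t * f t = z * f q) →
        f =ᵐ[volume.restrict box] 0 := by
  intro z hz f hf heig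
  classical
  set M : ℝ := w p (q0 p) with hMdef
  -- continuity of the pieces
  have hφc : Continuous φ := by
    rw [← continuousOn_univ]; exact hφa.continuousOn
  have hwc : Continuous (w p) := by
    have hc : Continuous (fun x : 𝕋 × 𝕋 => w x.1 x.2) := by
      rw [← continuousOn_univ]; exact hwa.continuousOn
    exact hc.comp (Continuous.prodMk_right p)
  -- denominators
  have hwle : ∀ q, w p q ≤ M := hq0max p hp
  have hzpos : ∀ q, 0 < z - w p q := fun q => by
    have := hwle q; linarith
  set C : ℝ := ∫ t in box, φ t * f t with hCdef
  -- a.e. formula for f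
  have heq : ∀ᵐ q ∂(volume.restrict box), f q = μ * φ q * C / (z - w p q) := by
    refine heig.mono fun q hq => ?_
    have hd : z - w p q ≠ 0 := ne_of_gt (hzpos q)
    rw [eq_div_iff hd]
    rw [hCdef]
    nlinarith [hq]
  by_cases hC : C = 0
  · refine heq.mono fun q hq => ?_
    simp [hq, hC]
  -- definitions of the two integrands
  set g : 𝕋 → ℝ := fun s => φ s ^ 2 / (M - w p s) with hgdef
  set h : 𝕋 → ℝ := fun s => φ s ^ 2 / (z - w p s) with hhdef
  -- g is integrable on box
  have hg_int : IntegrableOn g box volume := by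
    by_contra hni
    rw [MeasureTheory.integral_undef hni] at hΩ
    exact lt_irrefl 0 hΩ
  -- h is integrable on box
  have hh_cont : Continuous h := by
    apply (hφc.pow 2).div (by fun_prop)
    exact fun q => ne_of_gt (hzpos q)
  have hh_int : IntegrableOn h box volume := by
    refine (hh_cont.continuousOn.integrableOn_compact isCompact_Icc).mono_set box_subset_Icc
  -- the set where w p attains M is null
  have hE0 : volume {s : 𝕋 | w p s = M} = 0 := by
    have hsub : {s : 𝕋 | w p s = M} ⊆ Set.range (fun v : Fin 3 → ℤ => q0 p + shift v) := by
      intro s hs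
      obtain ⟨v, hv⟩ := hq0uniq p hp s hs
      exact ⟨v, hv.symm⟩
    exact measure_mono_null hsub ((Set.countable_range _).measure_zero _)
  -- a.e. h ≤ g
  have hae_notE : ∀ᵐ s ∂(volume.restrict box), w p s ≠ M := by
    refine ae_restrict_of_ae ?_
    rw [ae_iff]
    simpa using hE0
  have hle : h ≤ᵐ[volume.restrict box] g := by
    refine hae_notE.mono fun s hs => ?_
    have h1 : 0 < M - w p s := lt_of_le_of_ne (by linarith [hwle s]) (by intro hcon; exact hs (by linarith))
    exact div_le_div_of_nonneg_left (sq_nonneg _) h1 (by linarith)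
  -- strict inequality of integrals
  have hstrict : (∫ s in box, h s) < ∫ s in box, g s := by
    have hd_int : Integrable (fun s => g s - h s) (volume.restrict box) := hg_int.sub hh_int
    have hd_nn : (0 : 𝕋 → ℝ) ≤ᵐ[volume.restrict box] fun s => g s - h s :=
      hle.mono fun s hs => sub_nonneg.mpr hs
    -- find a point of the box where φ ≠ 0
    obtain ⟨x, hx⟩ := Function.ne_iff.mp hφnt
    set v : Fin 3 → ℤ := fun i => ⌊(Real.pi - x i) / (2 * Real.pi)⌋ with hvdef
    set y : 𝕋 := x + shift v with hydef
    have hy : φ y ≠ 0 := by rw [hydef, hφper]; exact hx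
    have hybox : ∀ i, -Real.pi < y i ∧ y i ≤ Real.pi := by
      intro i
      have hπ : (0:ℝ) < Real.pi := Real.pi_pos
      have h1 : ((⌊(Real.pi - x i) / (2 * Real.pi)⌋ : ℝ)) ≤ (Real.pi - x i) / (2 * Real.pi) :=
        Int.floor_le _
      have h2 : (Real.pi - x i) / (2 * Real.pi) - 1 < ((⌊(Real.pi - x i) / (2 * Real.pi)⌋ : ℝ)) :=
        Int.sub_one_lt_floor _
      have hyi : y i = x i + 2 * Real.pi * (⌊(Real.pi - x i) / (2 * Real.pi)⌋ : ℝ) := by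
        simp [hydef, shift, hvdef]
      rw [hyi]
      constructor
      · nlinarith [mul_lt_mul_of_pos_left h2 (by linarith : (0:ℝ) < 2 * Real.pi),
          mul_div_cancel₀ (Real.pi - x i) (by linarith : (2 * Real.pi) ≠ 0)]
      · nlinarith [mul_le_mul_of_nonneg_left h1 (by linarith : (0:ℝ) ≤ 2 * Real.pi),
          mul_div_cancel₀ (Real.pi - x i) (by linarith : (2 * Real.pi) ≠ 0)]
    -- a ball around y where φ ≠ 0
    have hopen : IsOpen {s : 𝕋 | φ s ≠ 0} := isOpen_ne.preimage hφc
    obtain ⟨r, hr, hball⟩ := Metric.isOpen_iff.mp hopen y hy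
    -- the small set
    set S0 : Set 𝕋 := Set.univ.pi fun i => Set.Ioc (max (y i - r / 2) (-Real.pi)) (y i)
      with hS0def
    have hS0box : S0 ⊆ box := by
      intro s hs i _
      have := hs i trivial
      exact ⟨lt_of_le_of_lt (le_max_right _ _) this.1,
        le_trans this.2 (hybox i).2⟩
    have hS0ball : S0 ⊆ Metric.ball y r := by
      intro s hs
      rw [Metric.mem_ball]
      rw [dist_pi_lt_iff hr]
      intro i
      have h1 := (hs i trivial).1
      have h2 := (hs i trivial).2
      have h3 : y i - r / 2 ≤ max (y i - r / 2) (-Real.pi) := le_max_left _ _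
      rw [Real.dist_eq, abs_lt]
      constructor <;> nlinarith
    have hS0vol : 0 < volume S0 := by
      rw [hS0def, volume_pi_pi]
      rw [CanonicallyOrderedAdd.prod_pos]
      intro i _
      rw [Real.volume_Ioc]
      rw [ENNReal.ofReal_pos]
      have := (hybox i).1
      rw [sub_pos]
      rcases max_cases (y i - r / 2) (-Real.pi) with ⟨hm, _⟩ | ⟨hm, _⟩ <;> rw [hm] <;> linarith
    set S : Set 𝕋 := S0 \ {s : 𝕋 | w p s = M} with hSdef
    have hSvol : 0 < volume S := by
      rw [hSdef, measure_diff_null hE0]; exact hS0vol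
    have hSsupp : S ⊆ Function.support (fun s => g s - h s) := by
      intro s hs
      have hsball := hS0ball hs.1
      have hφs : φ s ≠ 0 := hball hsball
      have hnum : 0 < φ s ^ 2 := by positivity
      have h1 : 0 < M - w p s :=
        lt_of_le_of_ne (by linarith [hwle s]) (by intro hcon; exact hs.2 (Set.mem_setOf.mpr (by linarith)))
      have hlt : h s < g s := by
        rw [hgdef, hhdef]
        exact div_lt_div_of_pos_left hnum h1 (by linarith)
      exact ne_of_gt (sub_pos.mpr hlt)
    have hsupp_pos : 0 < (volume.restrict box) (Function.support fun s => g s - h s) := by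
      refine lt_of_lt_of_le ?_ (measure_mono hSsupp)
      rw [Measure.restrict_apply' box_measurable,
        Set.inter_eq_self_of_subset_left (hSdef ▸ (Set.diff_subset.trans hS0box))]
      exact hSvol
    have hpos : 0 < ∫ s in box, (g s - h s) :=
      (integral_pos_iff_support_of_nonneg_ae hd_nn hd_int).mpr hsupp_pos
    rw [integral_sub hg_int hh_int] at hpos
    linarith
  -- value of C
  have hCeq : C = μ * C * ∫ s in box, h s := by
    have h2 : ∀ᵐ t ∂(volume.restrict box), φ t * f t = (μ * C) * h t := by
      refine heq.mono fun t ht => ?_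
      have hd : z - w p t ≠ 0 := ne_of_gt (hzpos t)
      rw [ht, hhdef]
      field_simp
    calc C = ∫ t in box, (μ * C) * h t := integral_congr_ae h2
    _ = (μ * C) * ∫ s in box, h s := integral_const_mul _ _
    _ = μ * C * ∫ s in box, h s := rfl
  have h1eq : μ * ∫ s in box, h s = 1 := by
    have h2 : C * (μ * (∫ s in box, h s) - 1) = 0 := by linear_combination -hCeq
    rcases mul_eq_zero.mp h2 with hcc | hcc
    · exact absurd hcc hC
    · linarith
  -- final contradiction
  have hgI : (0:ℝ) < ∫ s in box, g s := hΩ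
  have hμg : μ * ∫ s in box, g s ≤ 1 := by
    have := mul_le_mul_of_nonneg_right hμle hgI.le
    rwa [inv_mul_cancel₀ (ne_of_gt hgI)] at this
  have : μ * ∫ s in box, h s < μ * ∫ s in box, g s :=
    mul_lt_mul_of_pos_left hstrict hμ
  linarith
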